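/- Let N ≥ 1 be an integer, a > 0, γ > 1, and 0 < δ ≤ 1/2. Then for every ε > 0 there exists a constant C > 0 such that for every r ∈ [2δ, 1/(2δ)], every ρ ≥ 0, and every v ∈ ℝᴺ, one has |ρ − r| · |v| ≤ C ( E(ρ|r) + ρ |v|² ) + ε |v|², where E(ρ|r) = H(ρ) − H'(r)(ρ − r) − H(r) and |v| is the Euclidean norm. -/

import Mathlib

open Real Set

private lemma tangent_line_aux {S : Set ℝ} {f : ℝ → ℝ} {d x y : ℝ}
    (hfc : ConvexOn ℝ S f) (hx : x ∈ S) (hy : y ∈ S) (hd : HasDerivAt f d x) :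
    f x + d * (y - x) ≤ f y := by
  rcases lt_trichotomy x y with h | h | h
  · have h1 := hfc.le_slope_of_hasDerivAt hx hy h hd
    rw [slope_def_field, le_div_iff₀ (by linarith)] at h1
    linarith
  · subst h; simp
  · have h1 := hfc.slope_le_of_hasDerivAt hy hx h hd
    rw [slope_def_field, div_le_iff₀ (by linarith)] at h1
    linarith

private lemma kxg_hasDerivAt {k γ : ℝ} (hγ : 1 ≤ γ) (x : ℝ) :
    HasDerivAt (fun t : ℝ => k * t ^ γ) (k * (γ * x ^ (γ - 1))) x :=
  (Real.hasDerivAt_rpow_const (Or.inr hγ)).const_mul k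

private lemma kxg_convex {k γ : ℝ} (hk : 0 ≤ k) (hγ : 1 ≤ γ) :
    ConvexOn ℝ (Ici 0) (fun t : ℝ => k * t ^ γ) := by
  simpa [smul_eq_mul] using (convexOn_rpow hγ).smul hk

private lemma strong_tangent {k γ α lo hi r ρ : ℝ} (hk : 0 < k) (hγ : 1 < γ)
    (hlo : 0 < lo)
    (hα : ∀ x ∈ Ioo lo hi, α ≤ k * γ * (γ - 1) * x ^ (γ - 2))
    (hr : r ∈ Icc lo hi) (hρ : ρ ∈ Icc lo hi) :
    k * r ^ γ + k * (γ * r ^ (γ - 1)) * (ρ - r) + α / 2 * (ρ - r) ^ 2 ≤ k * ρ ^ γ := by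
  set φ : ℝ → ℝ := fun x => k * x ^ γ - α / 2 * x ^ 2 with hφ
  have hd : ∀ x : ℝ, HasDerivAt φ (k * (γ * x ^ (γ - 1)) - α * x) x := by
    intro x
    have h2 : HasDerivAt (fun x : ℝ => α / 2 * x ^ 2) (α * x) x := by
      have : HasDerivAt (fun y : ℝ => α / 2 * y ^ 2) (α / 2 * (((2:ℕ):ℝ) * x ^ (2 - 1))) x :=
        (hasDerivAt_pow 2 x).const_mul (α / 2)
      convert this using 1
      push_cast
      ring
    exact (kxg_hasDerivAt hγ.le x).sub h2
  have hconv : ConvexOn ℝ (Icc lo hi) φ := by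
    apply convexOn_of_hasDerivWithinAt2_nonneg (convex_Icc lo hi)
      (f' := fun x => k * (γ * x ^ (γ - 1)) - α * x)
      (f'' := fun x => k * γ * (γ - 1) * x ^ (γ - 2) - α)
    · exact fun x _ => (hd x).continuousAt.continuousWithinAt
    · exact fun x _ => (hd x).hasDerivWithinAt
    · intro x hx
      rw [interior_Icc] at hx
      have hx0 : 0 < x := lt_trans hlo hx.1
      have h1 : HasDerivAt (fun x : ℝ => k * (γ * x ^ (γ - 1)))
          (k * γ * ((γ - 1) * x ^ (γ - 1 - 1))) x := by
        have : HasDerivAt (fun y : ℝ => k * γ * y ^ (γ - 1)) (k * γ * ((γ - 1) * x ^ (γ - 1 - 1))) x :=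
          ((Real.hasDerivAt_rpow_const (p := γ - 1) (Or.inl hx0.ne')).const_mul (k * γ))
        convert this using 2 <;> ring
      have h2 : HasDerivAt (fun x : ℝ => α * x) α x := by
        simpa using (hasDerivAt_id x).const_mul α
      have h3 := h1.sub h2
      have hexp : γ - 1 - 1 = γ - 2 := by ring
      rw [hexp] at h3
      have h4 : k * γ * ((γ - 1) * x ^ (γ - 2)) = k * γ * (γ - 1) * x ^ (γ - 2) := by ring
      rw [h4] at h3
      exact h3.hasDerivWithinAt
    · intro x hx
      rw [interior_Icc] at hx
      linarith [hα x hx]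
  have := tangent_line_aux hconv hr hρ (hd r)
  simp only [hφ] at this
  nlinarith [this]
set_option maxHeartbeats 2000000 in
private lemma key_estimate (a γ δ ε : ℝ) (ha : 0 < a) (hγ : 1 < γ)
    (hδ0 : 0 < δ) (hδ : δ ≤ 1 / 2) (hε : 0 < ε) :
    ∃ C > (0 : ℝ), ∀ r ∈ Icc (2 * δ) (1 / (2 * δ)), ∀ ρ : ℝ, 0 ≤ ρ → ∀ t : ℝ, 0 ≤ t →
      |ρ - r| * t ≤
        C * ((a / (γ - 1) * ρ ^ γ - a * γ / (γ - 1) * r ^ (γ - 1) * (ρ - r)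
          - a / (γ - 1) * r ^ γ) + ρ * t ^ 2) + ε * t ^ 2 := by
  have hγ0 : 0 < γ := by linarith
  obtain ⟨m, hm_def⟩ : ∃ m : ℝ, m = 2 * δ := ⟨_, rfl⟩
  obtain ⟨M, hM_def⟩ : ∃ M : ℝ, M = 1 / (2 * δ) := ⟨_, rfl⟩
  have hm : 0 < m := by rw [hm_def]; linarith
  have hM : 0 < M := by rw [hM_def]; positivity
  have hm1 : m ≤ 1 := by rw [hm_def]; linarith
  have h1M : 1 ≤ M := by
    rw [hM_def, le_div_iff₀ (by linarith)]; linarith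
  have hmM : m ≤ M := hm1.trans h1M
  obtain ⟨k, hk_def⟩ : ∃ k : ℝ, k = a / (γ - 1) := ⟨_, rfl⟩
  have hk : 0 < k := by rw [hk_def]; exact div_pos ha (by linarith)
  obtain ⟨θ, hθ_def⟩ : ∃ θ : ℝ, θ = (γ - 1) / (2 * γ) := ⟨_, rfl⟩
  have hθ : 0 < θ := by rw [hθ_def]; exact div_pos (by linarith) (by linarith)
  have hθ1 : θ < 1 := by
    rw [hθ_def, div_lt_one (by linarith)]; linarith
  have hθγ : γ * θ = (γ - 1) / 2 := by
    rw [hθ_def]; field_simp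
  have hθm_pos : 0 < θ * m := mul_pos hθ hm
  have hθm_lt_m : θ * m < m := by linarith only [mul_pos (sub_pos.2 hθ1) hm]
  obtain ⟨α, hα_def⟩ : ∃ α : ℝ,
      α = k * γ * (γ - 1) * min ((θ * m) ^ (γ - 2)) ((4 * M) ^ (γ - 2)) := ⟨_, rfl⟩
  have hα : 0 < α := by
    have h1 : (0:ℝ) < (θ * m) ^ (γ - 2) := Real.rpow_pos_of_pos hθm_pos _
    have h2 : (0:ℝ) < (4 * M) ^ (γ - 2) := Real.rpow_pos_of_pos (by linarith) _
    rw [hα_def]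
    have h3 : 0 < min ((θ * m) ^ (γ - 2)) ((4 * M) ^ (γ - 2)) := lt_min h1 h2
    have h4 : 0 < k * γ * (γ - 1) := by
      apply mul_pos (mul_pos hk hγ0); linarith
    exact mul_pos h4 h3
  obtain ⟨c1, hc1_def⟩ : ∃ c1 : ℝ, c1 = k * (γ - 1) / 2 * m ^ γ := ⟨_, rfl⟩
  have hc1 : 0 < c1 := by
    rw [hc1_def]
    have h1 := Real.rpow_pos_of_pos hm γ
    have h2 : 0 < k * (γ - 1) / 2 := by
      apply div_pos (mul_pos hk (by linarith)); norm_num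
    exact mul_pos h2 h1
  obtain ⟨κ, hκ_def⟩ : ∃ κ : ℝ, κ = min (c1 / M ^ 2) (α / 2) := ⟨_, rfl⟩
  have hκ : 0 < κ := by
    rw [hκ_def]
    exact lt_min (div_pos hc1 (by positivity)) (by linarith)
  have h2γ : (1:ℝ) < 2 ^ (γ - 1) := by
    rw [show (1:ℝ) = 2 ^ (0:ℝ) by simp]
    exact Real.rpow_lt_rpow_left_iff (by norm_num) |>.2 (by linarith)
  obtain ⟨β, hβ_def⟩ : ∃ β : ℝ, β = k * γ * ((2 ^ (γ - 1) - 1) * M ^ (γ - 1)) := ⟨_, rfl⟩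
  have hβ : 0 < β := by
    rw [hβ_def]
    have h1 : (0:ℝ) < M ^ (γ - 1) := Real.rpow_pos_of_pos hM _
    have h2 : (0:ℝ) < 2 ^ (γ - 1) - 1 := by linarith
    exact mul_pos (mul_pos hk hγ0) (mul_pos h2 h1)
  obtain ⟨C, hC_def⟩ : ∃ C : ℝ, C = 1 / (4 * ε * κ) + 2 / β + 1 := ⟨_, rfl⟩
  have hC : 0 < C := by
    rw [hC_def]
    have h1 : (0:ℝ) < 1 / (4 * ε * κ) := by positivity
    have h2 : (0:ℝ) < 2 / β := by positivity
    linarith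
  refine ⟨C, hC, ?_⟩
  rw [← hM_def, ← hm_def]
  intro r hr ρ hρ t ht
  obtain ⟨hrm, hrM⟩ := hr
  have hr0 : 0 < r := lt_of_lt_of_le hm hrm
  obtain ⟨E, hE_eq⟩ : ∃ E : ℝ,
      E = k * ρ ^ γ - k * (γ * r ^ (γ - 1)) * (ρ - r) - k * r ^ γ := ⟨_, rfl⟩
  have hgoal_eq : a / (γ - 1) * ρ ^ γ - a * γ / (γ - 1) * r ^ (γ - 1) * (ρ - r)
      - a / (γ - 1) * r ^ γ = E := by
    rw [hE_eq, hk_def]; ring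
  rw [hgoal_eq]
  -- E is nonnegative
  have hE0 : 0 ≤ E := by
    have := tangent_line_aux (kxg_convex hk.le hγ.le) (mem_Ici.2 hr0.le)
      (mem_Ici.2 hρ) (kxg_hasDerivAt hγ.le r)
    rw [hE_eq]; linarith only [this]
  by_cases hcase : ρ ≤ 4 * M
  · -- bounded density: E ≥ κ (ρ - r)²
    have hEκ : κ * (ρ - r) ^ 2 ≤ E := by
      by_cases hsmall : ρ ≤ θ * m
      · -- tiny density
        have hrγ1 : m ^ (γ - 1) ≤ r ^ (γ - 1) :=
          Real.rpow_le_rpow hm.le hrm (by linarith)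
        have hrγ1pos : 0 < r ^ (γ - 1) := Real.rpow_pos_of_pos hr0 _
        have hmγ1pos : 0 < m ^ (γ - 1) := Real.rpow_pos_of_pos hm _
        have hrr : r ^ (γ - 1) * r = r ^ γ := by
          rw [← Real.rpow_add_one hr0.ne' (γ - 1)]; ring_nf
        have hmm : m ^ (γ - 1) * m = m ^ γ := by
          rw [← Real.rpow_add_one hm.ne' (γ - 1)]; ring_nf
        have hργ : 0 ≤ k * ρ ^ γ :=
          mul_nonneg hk.le (Real.rpow_nonneg hρ γ)
        -- γ * ρ ≤ (γ-1)/2 * m ≤ (γ-1)/2 * r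
        have hγρ : γ * ρ ≤ (γ - 1) / 2 * r := by
          have h1 : γ * ρ ≤ γ * (θ * m) := by
            apply mul_le_mul_of_nonneg_left hsmall hγ0.le
          have h2 : γ * (θ * m) = (γ - 1) / 2 * m := by
            rw [← mul_assoc, hθγ]
          have h3 : (γ - 1) / 2 * m ≤ (γ - 1) / 2 * r := by
            apply mul_le_mul_of_nonneg_left hrm (by linarith)
          linarith
        -- E ≥ k * r^(γ-1) * ((γ-1) r - γ ρ) ≥ c1
        have hElow : c1 ≤ E := by
          rw [hE_eq, hc1_def]
          have key : k * (γ - 1) / 2 * (m ^ (γ - 1) * m) ≤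
              k * (r ^ (γ - 1) * ((γ - 1) * r - γ * ρ)) := by
            have h3 : (γ - 1) / 2 * r ≤ (γ - 1) * r - γ * ρ := by linarith
            have h4 : m ^ (γ - 1) * m ≤ r ^ (γ - 1) * r :=
              mul_le_mul hrγ1 hrm hm.le hrγ1pos.le
            have h5 := mul_le_mul_of_nonneg_left h3 hrγ1pos.le
            have h6 : (γ - 1) / 2 * (m ^ (γ - 1) * m) ≤ (γ - 1) / 2 * (r ^ (γ - 1) * r) :=
              mul_le_mul_of_nonneg_left h4 (by linarith)
            have h8 : (γ - 1) / 2 * (m ^ (γ - 1) * m) ≤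
                r ^ (γ - 1) * ((γ - 1) * r - γ * ρ) := by linarith only [h5, h6]
            have h9 := mul_le_mul_of_nonneg_left h8 hk.le
            linarith only [h9]
          calc k * (γ - 1) / 2 * m ^ γ = k * (γ - 1) / 2 * (m ^ (γ - 1) * m) := by rw [hmm]
            _ ≤ k * (r ^ (γ - 1) * ((γ - 1) * r - γ * ρ)) := key
            _ = k * ρ ^ γ - k * (γ * r ^ (γ - 1)) * (ρ - r) - k * r ^ γ - k * ρ ^ γ := by
                rw [← hrr]; ring
            _ ≤ k * ρ ^ γ - k * (γ * r ^ (γ - 1)) * (ρ - r) - k * r ^ γ := by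
                linarith only [hργ]
        have hsq : (ρ - r) ^ 2 ≤ M ^ 2 := by
          have h1 : ρ ≤ r := (hsmall.trans hθm_lt_m.le).trans hrm
          have e1 : 0 ≤ ρ * (r - ρ) := mul_nonneg hρ (by linarith)
          have e2 : 0 ≤ r * ρ := mul_nonneg hr0.le hρ
          have e3 : r * r ≤ M * M := mul_le_mul hrM hrM hr0.le hM.le
          linarith only [e1, e2, e3]
        have hκ1 : κ ≤ c1 / M ^ 2 := by rw [hκ_def]; exact min_le_left _ _
        have h5 : κ * (ρ - r) ^ 2 ≤ c1 / M ^ 2 * M ^ 2 :=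
          mul_le_mul hκ1 hsq (sq_nonneg _) (by positivity)
        rw [div_mul_cancel₀ _ (by positivity : (M:ℝ) ^ 2 ≠ 0)] at h5
        linarith only [h5, hElow]
      · -- middle range: strong convexity
        push_neg at hsmall
        have hαbound : ∀ x ∈ Ioo (θ * m) (4 * M),
            α ≤ k * γ * (γ - 1) * x ^ (γ - 2) := by
          intro x hx
          have hx0 : 0 < x := lt_trans hθm_pos hx.1
          have hmin : min ((θ * m) ^ (γ - 2)) ((4 * M) ^ (γ - 2)) ≤ x ^ (γ - 2) := by
            rcases le_total γ 2 with h2 | h2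
            · refine (min_le_right _ _).trans ?_
              exact Real.rpow_le_rpow_of_nonpos hx0 hx.2.le (by linarith)
            · refine (min_le_left _ _).trans ?_
              exact Real.rpow_le_rpow hθm_pos.le hx.1.le (by linarith)
          rw [hα_def]
          have h6 : 0 < k * γ * (γ - 1) := by
            apply mul_pos (mul_pos hk hγ0); linarith
          exact mul_le_mul_of_nonneg_left hmin h6.le
        have hrmem : r ∈ Icc (θ * m) (4 * M) :=
          ⟨hθm_lt_m.le.trans hrm, hrM.trans (by linarith)⟩
        have hρmem : ρ ∈ Icc (θ * m) (4 * M) := ⟨hsmall.le, hcase⟩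
        have hst := strong_tangent hk hγ hθm_pos hαbound hrmem hρmem
        have hκ2 : κ ≤ α / 2 := by rw [hκ_def]; exact min_le_right _ _
        have h7 := mul_le_mul_of_nonneg_right hκ2 (sq_nonneg (ρ - r))
        rw [hE_eq]
        linarith only [hst, h7]
    -- combine via Young's inequality
    have step1 : |ρ - r| * t ≤ (ρ - r) ^ 2 / (4 * ε) + ε * t ^ 2 := by
      rw [div_add' _ _ _ (by positivity : (4 * ε) ≠ 0), le_div_iff₀ (by positivity)]
      linarith only [sq_nonneg (|ρ - r| - 2 * ε * t), sq_abs (ρ - r)]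
    have step2 : (ρ - r) ^ 2 ≤ E / κ := (le_div_iff₀ hκ).2 (by linarith only [hEκ])
    have step3 : (ρ - r) ^ 2 / (4 * ε) ≤ 1 / (4 * ε * κ) * E := by
      calc (ρ - r) ^ 2 / (4 * ε) ≤ (E / κ) / (4 * ε) := by
            apply div_le_div_of_nonneg_right step2 (by positivity)
        _ = 1 / (4 * ε * κ) * E := by
            rw [div_div, one_div, inv_mul_eq_div]
            congr 1
            ring
    have hC1 : 1 / (4 * ε * κ) ≤ C := by
      rw [hC_def]
      have h7 : 0 ≤ 2 / β := by positivity
      linarith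
    have hCρ : 0 ≤ C * (ρ * t ^ 2) := by positivity
    calc |ρ - r| * t ≤ (ρ - r) ^ 2 / (4 * ε) + ε * t ^ 2 := step1
      _ ≤ 1 / (4 * ε * κ) * E + ε * t ^ 2 := by linarith only [step3]
      _ ≤ C * E + C * (ρ * t ^ 2) + ε * t ^ 2 := by
          linarith only [mul_le_mul_of_nonneg_right hC1 hE0, hCρ]
      _ = C * (E + ρ * t ^ 2) + ε * t ^ 2 := by ring
  · -- large density
    push_neg at hcase
    have h2M : (0:ℝ) < 2 * M := by linarith
    -- tangent of k x^γ at 2M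
    have T1 := tangent_line_aux (kxg_convex hk.le hγ.le) (mem_Ici.2 h2M.le)
      (mem_Ici.2 hρ) (kxg_hasDerivAt hγ.le (2 * M))
    -- tangent at r evaluated at 2M
    have T2 := tangent_line_aux (kxg_convex hk.le hγ.le) (mem_Ici.2 hr0.le)
      (mem_Ici.2 h2M.le) (kxg_hasDerivAt hγ.le r)
    obtain ⟨A, hA_def⟩ : ∃ A : ℝ, A = k * γ * ((2 * M) ^ (γ - 1) - r ^ (γ - 1)) := ⟨_, rfl⟩
    have hEA : A * (ρ - 2 * M) ≤ E := by
      rw [hE_eq, hA_def]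
      linarith only [T1, T2]
    have hβA : β ≤ A := by
      rw [hβ_def, hA_def]
      have h1 : (2 * M) ^ (γ - 1) = 2 ^ (γ - 1) * M ^ (γ - 1) :=
        Real.mul_rpow (by norm_num) hM.le
      have h2 : r ^ (γ - 1) ≤ M ^ (γ - 1) :=
        Real.rpow_le_rpow hr0.le hrM (by linarith)
      have h3 : 0 < k * γ := mul_pos hk hγ0
      have h4 := mul_le_mul_of_nonneg_left h2 h3.le
      rw [h1]
      linarith only [h4]
    have hρ2 : ρ / 2 ≤ ρ - 2 * M := by linarith
    have hEρ : β * (ρ / 2) ≤ E := by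
      calc β * (ρ / 2) ≤ A * (ρ - 2 * M) :=
            mul_le_mul hβA hρ2 (by linarith) (by linarith)
        _ ≤ E := hEA
    have habs : |ρ - r| = ρ - r := abs_of_nonneg (by linarith)
    have step1 : |ρ - r| * t ≤ ρ / 2 + ρ * t ^ 2 / 2 := by
      rw [habs]
      linarith only [mul_nonneg hρ (sq_nonneg (t - 1)), mul_nonneg hr0.le ht]
    have step2 : ρ / 2 ≤ 1 / β * E := by
      rw [one_div, inv_mul_eq_div, le_div_iff₀ hβ]
      linarith only [hEρ]
    have hC2 : 1 / β ≤ C := by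
      rw [hC_def]
      have h1 : 1 / β ≤ 2 / β := by
        rw [div_le_div_iff_of_pos_right hβ]; norm_num
      have h2 : (0:ℝ) ≤ 1 / (4 * ε * κ) := by positivity
      linarith only [h1, h2]
    have hC3 : ρ * t ^ 2 / 2 ≤ C * (ρ * t ^ 2) := by
      have h1 : (1:ℝ)/2 ≤ C := by
        rw [hC_def]
        have h2 : (0:ℝ) ≤ 1 / (4 * ε * κ) := by positivity
        have h3 : (0:ℝ) ≤ 2 / β := by positivity
        linarith
      linarith only [mul_le_mul_of_nonneg_right h1 (mul_nonneg hρ (sq_nonneg t))]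
    have hεt : 0 ≤ ε * t ^ 2 := by positivity
    calc |ρ - r| * t ≤ ρ / 2 + ρ * t ^ 2 / 2 := step1
      _ ≤ 1 / β * E + C * (ρ * t ^ 2) := by linarith only [step2, hC3]
      _ ≤ C * E + C * (ρ * t ^ 2) := by
          linarith only [mul_le_mul_of_nonneg_right hC2 hE0]
      _ ≤ C * (E + ρ * t ^ 2) + ε * t ^ 2 := by
          linarith only [hεt]

theorem density_velocity_cross_term_estimate
    (N : ℕ) (hN : 1 ≤ N)
    (a γ δ : ℝ) (ha : 0 < a) (hγ : 1 < γ) (hδ0 : 0 < δ) (hδ : δ ≤ 1 / 2)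
    (H H' : ℝ → ℝ)
    (hH : ∀ ρ : ℝ, H ρ = a / (γ - 1) * ρ ^ γ)
    (hH' : ∀ r : ℝ, H' r = a * γ / (γ - 1) * r ^ (γ - 1)) :
    ∀ ε > (0 : ℝ), ∃ C > (0 : ℝ),
      ∀ r ∈ Set.Icc (2 * δ) (1 / (2 * δ)), ∀ ρ : ℝ, 0 ≤ ρ →
        ∀ v : EuclideanSpace ℝ (Fin N),
          |ρ - r| * ‖v‖ ≤
            C * ((H ρ - H' r * (ρ - r) - H r) + ρ * ‖v‖ ^ 2) + ε * ‖v‖ ^ 2 := by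
  intro ε hε
  obtain ⟨C, hC, hkey⟩ := key_estimate a γ δ ε ha hγ hδ0 hδ hε
  refine ⟨C, hC, ?_⟩
  intro r hr ρ hρ v
  have := hkey r hr ρ hρ ‖v‖ (norm_nonneg v)
  rw [hH ρ, hH r, hH' r]
  convert this using 4
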